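/- Let U ⊆ ℂ be a connected open set, let F, G : U → ℂ be holomorphic with F not identically zero, and define x(u+iv) = (Re h₁, −Im h₁, Re h₃) where h₁' = F, h₃' = −F·G. Then g₁₁g₂₂ − g₁₂² = |F|⁴, so z₀ is a singular point of the immersion (i.e., g₁₁g₂₂ − g₁₂² = 0 at z₀) exactly when F(z₀) = 0, and the set of singular points of x is discrete in U (each singular point has a neighborhood containing no other singular point). In particular, the singularities of a simply isotropic minimal immersion given by Weierstrass data are isolated. -/

import Mathlib

noncomputable section

/-- Partial derivative of a map on ℂ ≅ ℝ² in the u-direction (real direction 1). -/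
def du {E : Type*} [NormedAddCommGroup E] [NormedSpace ℝ E]
    (f : ℂ → E) : ℂ → E := fun z => fderiv ℝ f z 1

/-- Partial derivative of a map on ℂ ≅ ℝ² in the v-direction (direction i). -/
def dv {E : Type*} [NormedAddCommGroup E] [NormedSpace ℝ E]
    (f : ℂ → E) : ℂ → E := fun z => fderiv ℝ f z Complex.I

/-- The degenerate simply isotropic inner product on ℝ³: ⟨u,v⟩ = u₁v₁ + u₂v₂. -/
def isoInner (a b : ℝ × ℝ × ℝ) : ℝ := a.1 * b.1 + a.2.1 * b.2.1

/-- The Euclidean dot product on ℝ³. -/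
def dot3 (a b : ℝ × ℝ × ℝ) : ℝ := a.1 * b.1 + a.2.1 * b.2.1 + a.2.2 * b.2.2

/-- The Euclidean cross product on ℝ³. -/
def cross3 (a b : ℝ × ℝ × ℝ) : ℝ × ℝ × ℝ :=
  (a.2.1 * b.2.2 - a.2.2 * b.2.1, a.2.2 * b.1 - a.1 * b.2.2, a.1 * b.2.1 - a.2.1 * b.1)

/-- First fundamental form coefficients (isotropic metric) of x : ℂ → ℝ³. -/
def g11 (x : ℂ → ℝ × ℝ × ℝ) (z : ℂ) : ℝ := isoInner (du x z) (du x z)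
def g12 (x : ℂ → ℝ × ℝ × ℝ) (z : ℂ) : ℝ := isoInner (du x z) (dv x z)
def g22 (x : ℂ → ℝ × ℝ × ℝ) (z : ℂ) : ℝ := isoInner (dv x z) (dv x z)

/-- The minimal normal: the unique vector of the form (n₁,n₂,1) Euclidean-orthogonal to
x_u and x_v (obtained by normalizing the cross product so its third component is 1). -/
def Nm (x : ℂ → ℝ × ℝ × ℝ) (z : ℂ) : ℝ × ℝ × ℝ :=
  ((cross3 (du x z) (dv x z)).1 / (cross3 (du x z) (dv x z)).2.2,
   (cross3 (du x z) (dv x z)).2.1 / (cross3 (du x z) (dv x z)).2.2, 1)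

/-- Second fundamental form coefficients with respect to the minimal normal. -/
def h11 (x : ℂ → ℝ × ℝ × ℝ) (z : ℂ) : ℝ := dot3 (du (du x) z) (Nm x z)
def h12 (x : ℂ → ℝ × ℝ × ℝ) (z : ℂ) : ℝ := dot3 (du (dv x) z) (Nm x z)
def h22 (x : ℂ → ℝ × ℝ × ℝ) (z : ℂ) : ℝ := dot3 (dv (dv x) z) (Nm x z)

/-- The isotropic Gaussian curvature. -/
def Kcurv (x : ℂ → ℝ × ℝ × ℝ) (z : ℂ) : ℝ :=
  (h11 x z * h22 x z - (h12 x z) ^ 2) / (g11 x z * g22 x z - (g12 x z) ^ 2)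

/-- The isotropic mean curvature. -/
def meanH (x : ℂ → ℝ × ℝ × ℝ) (z : ℂ) : ℝ :=
  (g11 x z * h22 x z - 2 * g12 x z * h12 x z + g22 x z * h11 x z) /
    (2 * (g11 x z * g22 x z - (g12 x z) ^ 2))

/-- For the Weierstrass data φ = (F, iF, −FG) on a connected open set U with F not
identically zero: g₁₁g₂₂ − g₁₂² = |F|⁴, so z₀ is a singular point exactly when
F(z₀) = 0, and the set of singular points is discrete in U (each singular point has a
neighborhood containing no other singular point): the singularities of a simply
isotropic minimal immersion given by Weierstrass data are isolated. -/
theorem stmt17 (U : Set ℂ) (hU : IsOpen U) (hUconn : IsConnected U)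
    (F G h₁ h₃ : ℂ → ℂ)
    (hF : DifferentiableOn ℂ F U) (hG : DifferentiableOn ℂ G U)
    (hFne : ∃ z ∈ U, F z ≠ 0)
    (hh₁ : ∀ z ∈ U, HasDerivAt h₁ (F z) z)
    (hh₃ : ∀ z ∈ U, HasDerivAt h₃ (-(F z * G z)) z) :
    (∀ z ∈ U,
      g11 (fun w => ((h₁ w).re, -(h₁ w).im, (h₃ w).re)) z *
          g22 (fun w => ((h₁ w).re, -(h₁ w).im, (h₃ w).re)) z -
          (g12 (fun w => ((h₁ w).re, -(h₁ w).im, (h₃ w).re)) z) ^ 2 =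
        ‖F z‖ ^ 4) ∧
    (∀ z₀ ∈ U,
      (g11 (fun w => ((h₁ w).re, -(h₁ w).im, (h₃ w).re)) z₀ *
          g22 (fun w => ((h₁ w).re, -(h₁ w).im, (h₃ w).re)) z₀ -
          (g12 (fun w => ((h₁ w).re, -(h₁ w).im, (h₃ w).re)) z₀) ^ 2 = 0 ↔
        F z₀ = 0)) ∧
    (∀ z₀ ∈ U,
      g11 (fun w => ((h₁ w).re, -(h₁ w).im, (h₃ w).re)) z₀ *
          g22 (fun w => ((h₁ w).re, -(h₁ w).im, (h₃ w).re)) z₀ -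
          (g12 (fun w => ((h₁ w).re, -(h₁ w).im, (h₃ w).re)) z₀) ^ 2 = 0 →
      ∃ ε > 0, ∀ z ∈ U, dist z z₀ < ε →
        (g11 (fun w => ((h₁ w).re, -(h₁ w).im, (h₃ w).re)) z *
            g22 (fun w => ((h₁ w).re, -(h₁ w).im, (h₃ w).re)) z -
            (g12 (fun w => ((h₁ w).re, -(h₁ w).im, (h₃ w).re)) z) ^ 2 = 0 →
          z = z₀)) := by

  classical
  set x : ℂ → ℝ × ℝ × ℝ := fun w => ((h₁ w).re, -(h₁ w).im, (h₃ w).re) with hx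
  have key : ∀ z ∈ U, g11 x z = ‖F z‖ ^ 2 ∧ g12 x z = 0 ∧
      g22 x z = ‖F z‖ ^ 2 := by
    intro z hz
    have hd1 : HasFDerivAt h₁ (((1 : ℂ →L[ℂ] ℂ).smulRight (F z)).restrictScalars ℝ) z :=
      ((hh₁ z hz).hasFDerivAt).restrictScalars ℝ
    have hd3 : HasFDerivAt h₃ (((1 : ℂ →L[ℂ] ℂ).smulRight (-(F z * G z))).restrictScalars ℝ) z :=
      ((hh₃ z hz).hasFDerivAt).restrictScalars ℝ
    set L₁ := ((1 : ℂ →L[ℂ] ℂ).smulRight (F z)).restrictScalars ℝ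
    set L₃ := ((1 : ℂ →L[ℂ] ℂ).smulRight (-(F z * G z))).restrictScalars ℝ
    set D : ℂ →L[ℝ] ℝ × ℝ × ℝ :=
      (Complex.reCLM.comp L₁).prod ((-(Complex.imCLM.comp L₁)).prod (Complex.reCLM.comp L₃))
    have hxD : HasFDerivAt x D z := by
      exact HasFDerivAt.prodMk (Complex.reCLM.hasFDerivAt.comp z hd1)
        (HasFDerivAt.prodMk (HasFDerivAt.neg (Complex.imCLM.hasFDerivAt.comp z hd1))
          (Complex.reCLM.hasFDerivAt.comp z hd3))
    have hdu : du x z = D 1 := by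
      simp only [du, hxD.fderiv]
    have hdv : dv x z = D Complex.I := by
      simp only [dv, hxD.fderiv]
    have hD1 : (D 1 : ℝ × ℝ × ℝ).1 = (F z).re ∧ (D 1 : ℝ × ℝ × ℝ).2.1 = -(F z).im := by
      constructor <;> simp [D, L₁]
    have hDI : (D Complex.I : ℝ × ℝ × ℝ).1 = -(F z).im ∧
        (D Complex.I : ℝ × ℝ × ℝ).2.1 = -(F z).re := by
      constructor <;> simp [D, L₁]
    have habs : ‖F z‖ ^ 2 = (F z).re ^ 2 + (F z).im ^ 2 := by
      rw [Complex.sq_norm, Complex.normSq_apply]; ring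
    refine ⟨?_, ?_, ?_⟩ <;>
      simp only [g11, g12, g22, isoInner, hdu, hdv, hD1.1, hD1.2, hDI.1, hDI.2, habs] <;> ring
  have keydet : ∀ z ∈ U, g11 x z * g22 x z - g12 x z ^ 2 = ‖F z‖ ^ 4 := by
    intro z hz
    obtain ⟨e1, e2, e3⟩ := key z hz
    rw [e1, e2, e3]; ring
  have keyiff : ∀ z₀ ∈ U, (g11 x z₀ * g22 x z₀ - g12 x z₀ ^ 2 = 0 ↔ F z₀ = 0) := by
    intro z₀ hz₀
    rw [keydet z₀ hz₀]
    constructor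
    · intro h
      exact norm_eq_zero.mp (pow_eq_zero_iff (by norm_num : (4:ℕ) ≠ 0) |>.mp h)
    · intro h; simp [h]
  refine ⟨keydet, keyiff, ?_⟩
  intro z₀ hz₀ hsing
  have hF0 : F z₀ = 0 := (keyiff z₀ hz₀).mp hsing
  have hFa : AnalyticOnNhd ℂ F U := hF.analyticOnNhd hU
  rcases (hFa z₀ hz₀).eventually_eq_zero_or_eventually_ne_zero with hcase | hcase
  · exfalso
    have := hFa.eqOn_zero_of_preconnected_of_eventuallyEq_zero hUconn.isPreconnected hz₀ hcase
    obtain ⟨w, hw, hwne⟩ := hFne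
    exact hwne (this hw)
  · rw [eventually_nhdsWithin_iff] at hcase
    rw [Metric.eventually_nhds_iff] at hcase
    obtain ⟨ε, hε, hball⟩ := hcase
    refine ⟨ε, hε, fun z hzU hdist hzsing => ?_⟩
    by_contra hne
    exact hball hdist hne ((keyiff z hzU).mp hzsing)
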